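/- For any symmetric trilinear form A : E × E × E → ℝ on a finite-dimensional real vector space and any compact convex set S ⊂ E, sup_{u,v ∈ S} |A[u,u,v]| ≤ 6 · sup_{h ∈ S} |A[h,h,h]|. -/

import Mathlib

theorem stmt_5 {E : Type*} [NormedAddCommGroup E] [NormedSpace ℝ E]
    [FiniteDimensional ℝ E]
    (A : E →ₗ[ℝ] E →ₗ[ℝ] E →ₗ[ℝ] ℝ)
    (hsymm12 : ∀ u v w : E, A u v w = A v u w)
    (hsymm23 : ∀ u v w : E, A u v w = A u w v)
    (S : Set E) (hScomp : IsCompact S) (hSconv : Convex ℝ S) :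
    ∀ u ∈ S, ∀ v ∈ S,
      |A u u v| ≤ 6 * sSup {r : ℝ | ∃ h ∈ S, r = |A h h h|} := by
  intro u hu v hv
  have cont : Continuous fun h : E => A h h h := by
    set L1 : (E →ₗ[ℝ] ℝ) →ₗ[ℝ] (E →L[ℝ] ℝ) :=
      (LinearMap.toContinuousLinearMap : (E →ₗ[ℝ] ℝ) ≃ₗ[ℝ] (E →L[ℝ] ℝ)).toLinearMap
    set B : E →ₗ[ℝ] E →ₗ[ℝ] (E →L[ℝ] ℝ) :=
      (LinearMap.llcomp ℝ E (E →ₗ[ℝ] ℝ) (E →L[ℝ] ℝ) L1).comp A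
    set L2 : (E →ₗ[ℝ] (E →L[ℝ] ℝ)) →ₗ[ℝ] (E →L[ℝ] (E →L[ℝ] ℝ)) :=
      (LinearMap.toContinuousLinearMap :
        (E →ₗ[ℝ] (E →L[ℝ] ℝ)) ≃ₗ[ℝ] (E →L[ℝ] (E →L[ℝ] ℝ))).toLinearMap
    set C : E →L[ℝ] (E →L[ℝ] (E →L[ℝ] ℝ)) :=
      ⟨L2.comp B, by
        have h := LinearMap.continuous_of_finiteDimensional (𝕜 := ℝ) (E := E)
          (F' := E →L[ℝ] (E →L[ℝ] ℝ)) (L2.comp B)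
        exact h⟩
    have : ∀ h : E, A h h h = ((C h) h) h := fun h => rfl
    simp only [this]
    exact ((C.continuous.clm_apply continuous_id).clm_apply continuous_id)
  set T : Set ℝ := {r : ℝ | ∃ h ∈ S, r = |A h h h|} with hT
  have hTimg : T = (fun h => |A h h h|) '' S := by
    ext r; simp [hT, eq_comm]
  have hbdd : BddAbove T := by
    rw [hTimg]; exact (hScomp.image cont.abs).bddAbove
  have hmem : ∀ x ∈ S, |A x x x| ≤ sSup T := fun x hx =>
    le_csSup hbdd ⟨x, hx, rfl⟩
  set M := sSup T
  have hM0 : (0:ℝ) ≤ M := le_trans (abs_nonneg _) (hmem u hu)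
  -- convex combination points
  set x1 : E := (1/3 : ℝ) • u + (2/3 : ℝ) • v with hx1
  set x2 : E := (2/3 : ℝ) • u + (1/3 : ℝ) • v with hx2
  have hx1S : x1 ∈ S := hSconv hu hv (by norm_num) (by norm_num) (by norm_num)
  have hx2S : x2 ∈ S := hSconv hu hv (by norm_num) (by norm_num) (by norm_num)
  have h1 : A v u u = A u u v := by rw [hsymm12, hsymm23]
  have h2 : A v v u = A u v v := by rw [hsymm23, hsymm12]
  have h3 : A u v u = A u u v := by rw [hsymm23]
  have h4 : A v u v = A u v v := by rw [hsymm12]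
  have e1 : 27 * A x1 x1 x1 = 8 * A v v v + 12 * A u v v + 6 * A u u v + A u u u := by
    simp only [hx1, map_add, map_smul, LinearMap.add_apply, LinearMap.smul_apply, smul_eq_mul]
    rw [h1, h2, h3, h4]; ring
  have e2 : 27 * A x2 x2 x2 = A v v v + 6 * A u v v + 12 * A u u v + 8 * A u u u := by
    simp only [hx2, map_add, map_smul, LinearMap.add_apply, LinearMap.smul_apply, smul_eq_mul]
    rw [h1, h2, h3, h4]; ring
  have key : 18 * A u u v =
      54 * A x2 x2 x2 - 27 * A x1 x1 x1 + 6 * A v v v - 15 * A u u u := by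
    linarith
  have b1 := abs_le.mp (hmem x1 hx1S)
  have b2 := abs_le.mp (hmem x2 hx2S)
  have b3 := abs_le.mp (hmem u hu)
  have b4 := abs_le.mp (hmem v hv)
  rcases abs_cases (A u u v) with ⟨h, _⟩ | ⟨h, _⟩ <;> rw [h] <;> linarith
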